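/- Let 𝒯 = (T_ω)_{ω∈Ω} be a random dynamical system on a tight separable metric space X over a probability measure preserving system (Ω, B(Ω), ℙ, θ), with skew product S(ω,x) = (θ(ω), T_ω(x)) and invariant measure μ (i.e. μ is S-invariant and π_*μ = ℙ), with marginal ν = ∫ μ_ω dℙ on X, and let k ≥ 2 be an integer. If D̲_k(ν) > 0, then for μ^k-almost every (ω_1,x_1,…,ω_k,x_k) ∈ (Ω×X)^k, limsup_{n→∞} log m_n^{ω_1,…,ω_k}(x_1,…,x_k) / (−log n) ≤ k / ((k−1)·D̲_k(ν)). -/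

import Mathlib

open MeasureTheory Filter Set Metric Topology

noncomputable section

/-- The distance `d(y_1,...,y_k) = max_{i ≠ j} d(y_i, y_j)` between `k` points. -/
noncomputable def pairMax {X : Type*} [PseudoMetricSpace X] {k : ℕ} (y : Fin k → X) : ℝ :=
  ⨆ p : {q : Fin k × Fin k // q.1 ≠ q.2}, dist (y p.1.1) (y p.1.2)

/-- The random iteration `T_ω^n = T_{θ^{n-1}ω} ∘ ⋯ ∘ T_{θω} ∘ T_ω`. -/
def randomIter {Ω X : Type*} (θ : Ω → Ω) (T : Ω → X → X) : ℕ → Ω → X → X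
  | 0, _, x => x
  | n + 1, ω, x => randomIter θ T n (θ ω) (T ω x)

/-- The shortest distance between `k` random orbits up to time `n`. -/
noncomputable def mRandom {Ω X : Type*} [PseudoMetricSpace X] (θ : Ω → Ω) (T : Ω → X → X)
    {k : ℕ} (p : Fin k → Ω × X) (n : ℕ) : ℝ :=
  ⨅ i : Fin k → Fin n, pairMax fun j => randomIter θ T (i j : ℕ) (p j).1 (p j).2

/-- The lower generalized fractal dimension of `μ`. -/
noncomputable def lowerD {X : Type*} [PseudoMetricSpace X] [MeasurableSpace X]
    (μ : Measure X) (k : ℕ) : ℝ :=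
  liminf
    (fun r : ℝ =>
      Real.log (∫ x, (μ (ball x r)).toReal ^ (k - 1) ∂μ) / (((k : ℝ) - 1) * Real.log r))
    (nhdsWithin 0 (Set.Ioi 0))

/-- The upper generalized fractal dimension of `μ`. -/
noncomputable def upperD {X : Type*} [PseudoMetricSpace X] [MeasurableSpace X]
    (μ : Measure X) (k : ℕ) : ℝ :=
  limsup
    (fun r : ℝ =>
      Real.log (∫ x, (μ (ball x r)).toReal ^ (k - 1) ∂μ) / (((k : ℝ) - 1) * Real.log r))
    (nhdsWithin 0 (Set.Ioi 0))

/-- A metric space is tight if there are `r₀ > 0` and `N₀` such that every ball of radius `2r`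
(`0 < r < r₀`) can be covered by at most `N₀` balls of radius `r`. -/
def TightSpace (X : Type*) [PseudoMetricSpace X] : Prop :=
  ∃ (r₀ : ℝ) (N₀ : ℕ), 0 < r₀ ∧ ∀ r : ℝ, 0 < r → r < r₀ → ∀ x : X,
    ∃ s : Finset X, s.card ≤ N₀ ∧ ball x (2 * r) ⊆ ⋃ y ∈ s, ball y r

lemma pairMax_nonneg {X : Type*} [PseudoMetricSpace X] {k : ℕ} (y : Fin k → X) :
    0 ≤ pairMax y := Real.iSup_nonneg fun _ => dist_nonneg

lemma dist_le_pairMax {X : Type*} [PseudoMetricSpace X] {k : ℕ} (y : Fin k → X)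
    {a b : Fin k} (hab : a ≠ b) : dist (y a) (y b) ≤ pairMax y := by
  exact le_ciSup (f := fun p : {q : Fin k × Fin k // q.1 ≠ q.2} => dist (y p.1.1) (y p.1.2))
    (Set.Finite.bddAbove (Set.finite_range _)) ⟨(a, b), hab⟩

lemma mRandom_nonneg {Ω X : Type*} [PseudoMetricSpace X] (θ : Ω → Ω) (T : Ω → X → X)
    {k : ℕ} (p : Fin k → Ω × X) (n : ℕ) : 0 ≤ mRandom θ T p n :=
  Real.iInf_nonneg fun _ => pairMax_nonneg _

lemma mRandom_anti {Ω X : Type*} [PseudoMetricSpace X] (θ : Ω → Ω) (T : Ω → X → X)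
    {k : ℕ} (p : Fin k → Ω × X) {n n' : ℕ} (hn : 1 ≤ n) (h : n ≤ n') :
    mRandom θ T p n' ≤ mRandom θ T p n := by
  haveI : NeZero n := ⟨by omega⟩
  apply le_ciInf
  intro i
  have hb : BddBelow (Set.range fun i : Fin k → Fin n' =>
      pairMax fun j => randomIter θ T (i j : ℕ) (p j).1 (p j).2) :=
    ⟨0, by rintro x ⟨i, rfl⟩; exact pairMax_nonneg _⟩
  have := ciInf_le hb (fun j => Fin.castLE h (i j))
  simpa [mRandom] using this

lemma randomIter_skew {Ω X : Type*} (θ : Ω → Ω) (T : Ω → X → X) :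
    ∀ (n : ℕ) (q : Ω × X), (fun q : Ω × X => (θ q.1, T q.1 q.2))^[n] q
      = (θ^[n] q.1, randomIter θ T n q.1 q.2)
  | 0, q => rfl
  | n+1, q => by
      rw [Function.iterate_succ_apply, randomIter_skew θ T n]
      simp [randomIter, Function.iterate_succ_apply]

lemma eventually_le_of_lt_liminf_real {α : Type*} {f : Filter α} {u : α → ℝ} {s : ℝ}
    (h0 : 0 < liminf u f) (hs : s < liminf u f) : ∀ᶠ x in f, s ≤ u x := by
  rw [liminf_eq] at h0 hs
  have hne : {a : ℝ | ∀ᶠ x in f, a ≤ u x}.Nonempty := by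
    by_contra h
    rw [not_nonempty_iff_eq_empty.mp h, Real.sSup_empty] at h0
    exact lt_irrefl _ h0
  have hbdd : BddAbove {a : ℝ | ∀ᶠ x in f, a ≤ u x} := by
    by_contra h
    rw [Real.sSup_of_not_bddAbove h] at h0
    exact lt_irrefl _ h0
  obtain ⟨a, ha, hsa⟩ := exists_lt_of_lt_csSup hne hs
  exact ha.mono fun x hx => le_trans hsa.le hx

lemma measurable_measure_ball' {X : Type*} [MetricSpace X] [MeasurableSpace X] [BorelSpace X]
    [TopologicalSpace.SeparableSpace X]
    (ν : Measure X) [SFinite ν] (r : ℝ) : Measurable fun x : X => ν (ball x r) := by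
  haveI := UniformSpace.secondCountable_of_separable X
  have hs : MeasurableSet {q : X × X | dist q.2 q.1 < r} :=
    measurableSet_lt (continuous_snd.dist continuous_fst).measurable measurable_const
  have h := measurable_measure_prodMk_left (ν := ν) hs
  have he : (fun x : X => ν (ball x r))
      = fun x => ν (Prod.mk x ⁻¹' {q : X × X | dist q.2 q.1 < r}) := by
    funext x; rfl
  rw [he]; exact h

lemma pi_ball_lintegral {X : Type*} [MetricSpace X] [MeasurableSpace X] [BorelSpace X]
    [TopologicalSpace.SeparableSpace X]
    (ν : Measure X) [IsProbabilityMeasure ν] (m : ℕ) {r : ℝ} (hr : 0 < r) :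
    Measure.pi (fun _ : Fin (m + 2) => ν) {y | ∀ j, y j ∈ ball (y 0) r}
      = ∫⁻ x, ν (ball x r) ^ (m + 1) ∂ν := by
  set D : Set (X × (Fin (m+1) → X)) := {q | ∀ j, q.2 j ∈ ball q.1 r} with hDdef
  haveI := UniformSpace.secondCountable_of_separable X
  have hD : MeasurableSet D := by
    have : D = ⋂ j, {q : X × (Fin (m+1) → X) | dist (q.2 j) q.1 < r} := by
      ext q; simp [hDdef, Metric.mem_ball]
    rw [this]
    exact MeasurableSet.iInter fun j => measurableSet_lt
      (((continuous_apply j).comp continuous_snd).dist continuous_fst).measurable measurable_const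
  have hmp := measurePreserving_piFinSuccAbove (fun _ : Fin (m+2) => ν) 0
  have hpre : {y : Fin (m+2) → X | ∀ j, y j ∈ ball (y 0) r}
      = (MeasurableEquiv.piFinSuccAbove (fun _ : Fin (m+2) => X) 0) ⁻¹' D := by
    ext y
    simp only [mem_setOf_eq, mem_preimage, hDdef, MeasurableEquiv.piFinSuccAbove_apply]
    constructor
    · intro h j; exact h _
    · intro h
      rw [Fin.forall_iff_succAbove (0 : Fin (m+2))]
      exact ⟨mem_ball_self hr, h⟩
  rw [hpre, hmp.measure_preimage hD.nullMeasurableSet, Measure.prod_apply hD]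
  congr 1 with x
  have : (Prod.mk x ⁻¹' D) = Set.pi Set.univ (fun _ : Fin (m+1) => ball x r) := by
    ext z; simp [hDdef]
  rw [this, Measure.pi_pi]
  simp [Finset.prod_const]

lemma geom_calc (m l : ℕ) (c' s δ : ℝ)
    (hδ : δ = c' * s * (((m+2:ℕ):ℝ) - 1) - ((m+2:ℕ):ℝ)) :
    ((2^(l+1) : ℕ) : ℝ) ^ (m+2) * (((2:ℝ) ^ (-c' : ℝ)) ^ l) ^ (s * (((m+2:ℕ):ℝ) - 1))
      = (2:ℝ) ^ (m+2) * (((2:ℝ) ^ (-δ : ℝ)) ^ l) := by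
  have h2 : (0:ℝ) ≤ 2 := by norm_num
  have e1 : (((2:ℝ) ^ (-c' : ℝ)) ^ l) = (2:ℝ) ^ ((-c') * l) := by
    rw [← Real.rpow_natCast ((2:ℝ) ^ (-c' : ℝ)) l, ← Real.rpow_mul h2]
  have e2 : (((2:ℝ) ^ (-δ : ℝ)) ^ l) = (2:ℝ) ^ ((-δ) * l) := by
    rw [← Real.rpow_natCast ((2:ℝ) ^ (-δ : ℝ)) l, ← Real.rpow_mul h2]
  have e3 : ((2^(l+1) : ℕ) : ℝ) ^ (m+2) = (2:ℝ) ^ ((((l+1) * (m+2) : ℕ)) : ℝ) := by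
    rw [Real.rpow_natCast]; push_cast; ring
  have e4 : ((2:ℝ)) ^ (m+2) = (2:ℝ) ^ (((m+2:ℕ)) : ℝ) := by rw [Real.rpow_natCast]
  have e5 : ((2:ℝ) ^ ((-c') * l)) ^ (s * (((m+2:ℕ):ℝ) - 1))
      = (2:ℝ) ^ ((-c') * l * (s * (((m+2:ℕ):ℝ) - 1))) := by
    rw [← Real.rpow_mul h2]
  rw [e1, e2, e3, e4, e5, ← Real.rpow_add (by norm_num : (0:ℝ) < 2),
    ← Real.rpow_add (by norm_num : (0:ℝ) < 2)]
  congr 1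
  push_cast [hδ]
  ring

set_option maxHeartbeats 1000000 in
theorem random_shortest_distance_upper_bound
    {Ω X : Type*} [MetricSpace Ω] [MeasurableSpace Ω] [BorelSpace Ω]
    [MetricSpace X] [TopologicalSpace.SeparableSpace X] [MeasurableSpace X] [BorelSpace X]
    (P : Measure Ω) [IsProbabilityMeasure P] (θ : Ω → Ω) (hθ : MeasurePreserving θ P P)
    (T : Ω → X → X) (hTmeas : Measurable fun q : Ω × X => T q.1 q.2)
    (htight : TightSpace X)
    (μ : Measure (Ω × X)) [IsProbabilityMeasure μ]
    (hS : MeasurePreserving (fun q : Ω × X => (θ q.1, T q.1 q.2)) μ μ)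
    (hproj : Measure.map Prod.fst μ = P)
    (k : ℕ) (hk : 2 ≤ k)
    (hD : 0 < lowerD (Measure.map Prod.snd μ) k) :
    ∀ᵐ p ∂(Measure.pi fun _ : Fin k => μ),
      limsup (fun n : ℕ => Real.log (mRandom θ T p n) / (-Real.log (n : ℝ))) atTop ≤
        (k : ℝ) / (((k : ℝ) - 1) * lowerD (Measure.map Prod.snd μ) k) := by
  obtain ⟨m, rfl⟩ : ∃ m, k = m + 2 := ⟨k - 2, by omega⟩
  clear hk
  set S : Ω × X → Ω × X := fun q => (θ q.1, T q.1 q.2) with hS_def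
  set ν : Measure X := Measure.map Prod.snd μ with hν_def
  haveI hνprob : IsProbabilityMeasure ν := Measure.isProbabilityMeasure_map measurable_snd.aemeasurable
  haveI := UniformSpace.secondCountable_of_separable X
  set M : Measure (Fin (m+2) → Ω × X) := Measure.pi fun _ : Fin (m + 2) => μ with hM_def
  haveI : IsProbabilityMeasure M := by rw [hM_def]; infer_instance
  set D : ℝ := lowerD ν (m+2) with hD_def
  have hm1 : (0:ℝ) < ((m+2:ℕ):ℝ) - 1 := by push_cast; linarith
  have hK : 0 < ((m+2:ℕ):ℝ) / ((((m+2:ℕ):ℝ) - 1) * D) := by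
    apply div_pos (by positivity) (mul_pos hm1 hD)
  -- the maps (ω,x) ↦ T_ω^i x are measure preserving μ → ν
  have hF : ∀ i : ℕ, MeasurePreserving (fun q : Ω × X => randomIter θ T i q.1 q.2) μ ν := by
    intro i
    have h1 : MeasurePreserving (S^[i]) μ μ := hS.iterate i
    have h2 : MeasurePreserving (Prod.snd : Ω × X → X) μ ν := ⟨measurable_snd, rfl⟩
    have h3 := h2.comp h1
    have he : (Prod.snd : Ω × X → X) ∘ S^[i] = fun q : Ω × X => randomIter θ T i q.1 q.2 := by
      funext q; rw [Function.comp_apply, hS_def, randomIter_skew]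
    rwa [he] at h3
  -- key measure estimate
  have step2 : ∀ n : ℕ, 1 ≤ n → ∀ r : ℝ, 0 < r →
      M {p | mRandom θ T p n < r}
        ≤ (n : ENNReal) ^ (m+2) * ∫⁻ x, ν (ball x r) ^ (m+1) ∂ν := by
    intro n hn r hr
    haveI : Nonempty (Fin n) := Fin.pos_iff_nonempty.mp (by omega)
    set C : Set (Fin (m+2) → X) := {y | ∀ j, y j ∈ ball (y 0) r} with hC_def
    have hC : MeasurableSet C := by
      have hCi : C = ⋂ j, {y : Fin (m+2) → X | dist (y j) (y 0) < r} := by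
        ext y; simp [hC_def, Metric.mem_ball]
      rw [hCi]
      exact MeasurableSet.iInter fun j => measurableSet_lt
        ((continuous_apply j).dist (continuous_apply 0)).measurable measurable_const
    have hsub : {p : Fin (m+2) → Ω × X | mRandom θ T p n < r} ⊆
        ⋃ i : Fin (m+2) → Fin n,
          (fun p (j : Fin (m+2)) => randomIter θ T (i j : ℕ) (p j).1 (p j).2) ⁻¹' C := by
      intro p hp
      simp only [mem_setOf_eq] at hp
      unfold mRandom at hp
      obtain ⟨i, hi⟩ := exists_lt_of_ciInf_lt hp
      refine mem_iUnion.2 ⟨i, fun j => ?_⟩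
      rcases eq_or_ne j 0 with h | h
      · subst h; exact mem_ball_self hr
      · exact lt_of_le_of_lt (dist_le_pairMax _ h) hi
    refine (measure_mono hsub).trans ((measure_iUnion_fintype_le _ _).trans ?_)
    have heach : ∀ i : Fin (m+2) → Fin n,
        M ((fun p (j : Fin (m+2)) => randomIter θ T (i j : ℕ) (p j).1 (p j).2) ⁻¹' C)
          = ∫⁻ x, ν (ball x r) ^ (m+1) ∂ν := by
      intro i
      have hmp := measurePreserving_pi (fun _ : Fin (m+2) => μ) (fun _ : Fin (m+2) => ν)
        (fun j => hF (i j))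
      rw [hM_def, hmp.measure_preimage hC.nullMeasurableSet]
      exact pi_ball_lintegral ν m hr
    rw [Finset.sum_congr rfl fun i _ => heach i, Finset.sum_const, Finset.card_univ,
      Fintype.card_fun, Fintype.card_fin, Fintype.card_fin, nsmul_eq_mul]
    push_cast
    exact le_refl _
  -- main per-constant estimate
  have key : ∀ c : ℝ, ((m+2:ℕ):ℝ) / ((((m+2:ℕ):ℝ) - 1) * D) < c →
      ∀ᵐ p ∂M, limsup (fun n : ℕ => Real.log (mRandom θ T p n) / (-Real.log (n:ℝ))) atTop ≤ c := by
    intro c hc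
    have hc0 : 0 < c := lt_trans hK hc
    set c' : ℝ := (((m+2:ℕ):ℝ) / ((((m+2:ℕ):ℝ) - 1) * D) + c) / 2 with hc'_def
    have hc'K : ((m+2:ℕ):ℝ) / ((((m+2:ℕ):ℝ) - 1) * D) < c' := by rw [hc'_def]; linarith
    have hc'c : c' < c := by rw [hc'_def]; linarith
    have hc'0 : 0 < c' := lt_trans hK hc'K
    have ha : ((m+2:ℕ):ℝ) / (c' * (((m+2:ℕ):ℝ) - 1)) < D := by
      rw [div_lt_iff₀ (by positivity)]
      have h1 := (div_lt_iff₀ (mul_pos hm1 hD)).mp hc'K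
      nlinarith
    have ha0 : 0 < ((m+2:ℕ):ℝ) / (c' * (((m+2:ℕ):ℝ) - 1)) := by positivity
    set s : ℝ := (((m+2:ℕ):ℝ) / (c' * (((m+2:ℕ):ℝ) - 1)) + D) / 2 with hs_def
    have hs0 : 0 < s := by rw [hs_def]; linarith
    have hsD : s < D := by rw [hs_def]; linarith
    have hδpos : 0 < c' * s * (((m+2:ℕ):ℝ) - 1) - ((m+2:ℕ):ℝ) := by
      have h1 : ((m+2:ℕ):ℝ) / (c' * (((m+2:ℕ):ℝ) - 1)) < s := by rw [hs_def]; linarith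
      have h2 := (div_lt_iff₀ (by positivity)).mp h1
      nlinarith
    set δ : ℝ := c' * s * (((m+2:ℕ):ℝ) - 1) - ((m+2:ℕ):ℝ) with hδ_def
    -- dimension estimate, eventually in r
    have hD' := hD
    have hsD' := hsD
    rw [hD_def, lowerD] at hD' hsD'
    have hev := eventually_le_of_lt_liminf_real hD' hsD'
    have hPdim : ∀ᶠ r in nhdsWithin (0:ℝ) (Set.Ioi 0),
        (∫⁻ x, ν (ball x r) ^ (m+1) ∂ν) ≤ ENNReal.ofReal (r ^ (s * (((m+2:ℕ):ℝ) - 1))) := by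
      have hIoo : Ioo (0:ℝ) 1 ∈ nhdsWithin (0:ℝ) (Set.Ioi 0) :=
        Ioo_mem_nhdsGT_of_mem ⟨le_refl 0, one_pos⟩
      filter_upwards [hev, hIoo] with r hsr hr01
      obtain ⟨hr0, hr1⟩ := hr01
      set I : ℝ := ∫ x, (ν (ball x r)).toReal ^ (m + 2 - 1) ∂ν with hI_def
      set L : ENNReal := ∫⁻ x, ν (ball x r) ^ (m+1) ∂ν with hL_def
      have hg : Measurable fun x : X => ν (ball x r) := measurable_measure_ball' ν r
      have hLle : L ≤ 1 := by
        rw [hL_def]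
        calc ∫⁻ x, ν (ball x r) ^ (m+1) ∂ν ≤ ∫⁻ _, 1 ∂ν :=
              lintegral_mono fun x => pow_le_one' prob_le_one _
          _ = 1 := by simp
      have hLtop : L ≠ ⊤ := (lt_of_le_of_lt hLle ENNReal.one_lt_top).ne
      have hIL : I = L.toReal := by
        rw [hI_def, hL_def, ← integral_toReal ((hg.pow_const _).aemeasurable)
            (Eventually.of_forall fun x =>
              lt_of_le_of_lt (pow_le_one' prob_le_one _) ENNReal.one_lt_top)]
        exact integral_congr_ae (Eventually.of_forall fun x => by
          simp [ENNReal.toReal_pow])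
      have hlogr : Real.log r < 0 := Real.log_neg hr0 hr1
      have hden : (((m+2:ℕ):ℝ) - 1) * Real.log r < 0 := mul_neg_of_pos_of_neg hm1 hlogr
      have hlog : Real.log I ≤ s * ((((m+2:ℕ):ℝ) - 1) * Real.log r) :=
        (le_div_iff_of_neg hden).mp hsr
      have hIle : I ≤ r ^ (s * (((m+2:ℕ):ℝ) - 1)) := by
        rcases le_or_gt I 0 with h | h
        · exact h.trans (Real.rpow_pos_of_pos hr0 _).le
        · calc I = Real.exp (Real.log I) := (Real.exp_log h).symm
            _ ≤ Real.exp (s * ((((m+2:ℕ):ℝ) - 1) * Real.log r)) := Real.exp_le_exp.2 hlog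
            _ = r ^ (s * (((m+2:ℕ):ℝ) - 1)) := by
                rw [Real.rpow_def_of_pos hr0]; ring_nf
      calc L = ENNReal.ofReal L.toReal := (ENNReal.ofReal_toReal hLtop).symm
        _ = ENNReal.ofReal I := by rw [hIL]
        _ ≤ ENNReal.ofReal (r ^ (s * (((m+2:ℕ):ℝ) - 1))) := ENNReal.ofReal_le_ofReal hIle
    -- geometric radii
    set q : ℝ := (2:ℝ) ^ (-c' : ℝ) with hq_def
    have hq0 : 0 < q := Real.rpow_pos_of_pos two_pos _
    have hq1 : q < 1 := Real.rpow_lt_one_of_one_lt_of_neg one_lt_two (by linarith)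
    have htend : Tendsto (fun l : ℕ => q ^ l) atTop (nhdsWithin (0:ℝ) (Set.Ioi 0)) :=
      tendsto_nhdsWithin_of_tendsto_nhds_of_eventually_within _
        (tendsto_pow_atTop_nhds_zero_of_lt_one hq0.le hq1)
        (Eventually.of_forall fun l => pow_pos hq0 l)
    have hPl : ∀ᶠ l : ℕ in atTop,
        (∫⁻ x, ν (ball x (q ^ l)) ^ (m+1) ∂ν)
          ≤ ENNReal.ofReal ((q ^ l) ^ (s * (((m+2:ℕ):ℝ) - 1))) :=
      htend.eventually hPdim
    set w : ENNReal := ENNReal.ofReal ((2:ℝ) ^ (-δ : ℝ)) with hw_def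
    have hw1 : w < 1 := by
      rw [hw_def, ENNReal.ofReal_lt_one]
      exact Real.rpow_lt_one_of_one_lt_of_neg one_lt_two (by linarith)
    set E : ℕ → Set (Fin (m+2) → Ω × X) :=
      fun l => {p | mRandom θ T p (2^(l+1)) < q ^ l} with hE_def
    have hbound : ∀ l : ℕ,
        ((∫⁻ x, ν (ball x (q ^ l)) ^ (m+1) ∂ν)
          ≤ ENNReal.ofReal ((q ^ l) ^ (s * (((m+2:ℕ):ℝ) - 1)))) →
        M (E l) ≤ ENNReal.ofReal ((2:ℝ)^(m+2)) * w ^ l := by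
      intro l hl
      have h1 := step2 (2^(l+1)) Nat.one_le_two_pow (q ^ l) (pow_pos hq0 l)
      calc M (E l) ≤ ((2^(l+1) : ℕ) : ENNReal) ^ (m+2) * ∫⁻ x, ν (ball x (q^l)) ^ (m+1) ∂ν := by
            exact_mod_cast h1
        _ ≤ ((2^(l+1) : ℕ) : ENNReal) ^ (m+2)
              * ENNReal.ofReal ((q ^ l) ^ (s * (((m+2:ℕ):ℝ) - 1))) := by gcongr
        _ = ENNReal.ofReal (((2^(l+1) : ℕ) : ℝ) ^ (m+2)
              * ((q ^ l) ^ (s * (((m+2:ℕ):ℝ) - 1)))) := by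
            rw [ENNReal.ofReal_mul (by positivity), ENNReal.ofReal_pow (by positivity),
              ENNReal.ofReal_natCast]
        _ = ENNReal.ofReal ((2:ℝ)^(m+2) * ((2:ℝ) ^ (-δ : ℝ)) ^ l) := by
            rw [hq_def, geom_calc m l c' s δ hδ_def]
        _ = ENNReal.ofReal ((2:ℝ)^(m+2)) * w ^ l := by
            rw [ENNReal.ofReal_mul (by positivity), hw_def,
              ENNReal.ofReal_pow (p := (2:ℝ) ^ (-δ : ℝ)) (by positivity)]
    obtain ⟨L₀, hL₀⟩ := eventually_atTop.1 hPl
    have hsum : (∑' l : ℕ, M (E (l + L₀))) ≠ ⊤ := by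
      have hle : ∀ l : ℕ, M (E (l + L₀)) ≤ ENNReal.ofReal ((2:ℝ)^(m+2)) * w ^ l := by
        intro l
        calc M (E (l + L₀)) ≤ ENNReal.ofReal ((2:ℝ)^(m+2)) * w ^ (l + L₀) :=
              hbound _ (hL₀ _ (Nat.le_add_left _ _))
          _ ≤ ENNReal.ofReal ((2:ℝ)^(m+2)) * w ^ l :=
              mul_le_mul_right (pow_le_pow_of_le_one zero_le hw1.le (Nat.le_add_right _ _)) _
      refine ne_of_lt (lt_of_le_of_lt (ENNReal.tsum_le_tsum hle) ?_)
      rw [ENNReal.tsum_mul_left, ENNReal.tsum_geometric]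
      exact ENNReal.mul_lt_top ENNReal.ofReal_lt_top
        (ENNReal.inv_lt_top.2 (tsub_pos_of_lt hw1))
    have hBC := MeasureTheory.ae_eventually_notMem hsum
    filter_upwards [hBC] with p hp
    obtain ⟨L₁, hL₁⟩ := eventually_atTop.1 hp
    have hplow : ∀ l : ℕ, L₁ + L₀ ≤ l → q ^ l ≤ mRandom θ T p (2^(l+1)) := by
      intro l hl
      have h1 := hL₁ (l - L₀) (by omega)
      have hll : l - L₀ + L₀ = l := by omega
      rw [hll, hE_def] at h1
      simpa only [mem_setOf_eq, not_lt] using h1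
    set A : ℝ := Real.log (max (mRandom θ T p 2) 1) with hA_def
    have hA0 : 0 ≤ A := Real.log_nonneg (le_max_right _ _)
    have hev_n : ∀ᶠ n : ℕ in atTop,
        Real.log (mRandom θ T p n) / (-Real.log (n:ℝ)) ≤ c ∧
        -A ≤ Real.log (mRandom θ T p n) / (-Real.log (n:ℝ)) := by
      rw [eventually_atTop]
      refine ⟨max (2^(L₁+L₀+1)) 3, fun n hn => ?_⟩
      have hn3 : 3 ≤ n := le_trans (le_max_right _ _) hn
      have hnp : 2^(L₁+L₀+1) ≤ n := le_trans (le_max_left _ _) hn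
      set l : ℕ := Nat.log 2 n with hl_def
      have h2l : 2^l ≤ n := Nat.pow_log_le_self 2 (by omega)
      have hn2l : n < 2^(l+1) := Nat.lt_pow_succ_log_self one_lt_two n
      have hlL : L₁ + L₀ ≤ l := by
        have : 2^(L₁+L₀+1) < 2^(l+1) := lt_of_le_of_lt hnp hn2l
        have := (Nat.pow_lt_pow_iff_right one_lt_two).mp this
        omega
      have hmono : mRandom θ T p (2^(l+1)) ≤ mRandom θ T p n :=
        mRandom_anti θ T p (by omega) hn2l.le
      have hlow : q ^ l ≤ mRandom θ T p n := le_trans (hplow l hlL) hmono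
      have hnpos : (0:ℝ) < (n:ℝ) := by exact_mod_cast (by omega : 0 < n)
      have h2lpos : (0:ℝ) < ((2^l : ℕ):ℝ) := by positivity
      have hrpow : (n:ℝ) ^ (-c : ℝ) ≤ q ^ l := by
        have a1 : (n:ℝ) ^ (-c : ℝ) ≤ ((2^l : ℕ):ℝ) ^ (-c : ℝ) :=
          Real.rpow_le_rpow_of_nonpos h2lpos (by exact_mod_cast h2l) (by linarith)
        have a2 : ((2^l : ℕ):ℝ) ^ (-c : ℝ) ≤ ((2^l : ℕ):ℝ) ^ (-c' : ℝ) :=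
          Real.rpow_le_rpow_of_exponent_le (by exact_mod_cast Nat.one_le_two_pow) (by linarith)
        have a3 : ((2^l : ℕ):ℝ) ^ (-c' : ℝ) = q ^ l := by
          rw [hq_def]
          push_cast
          rw [← Real.rpow_natCast (2:ℝ) l, ← Real.rpow_mul (by norm_num),
            ← Real.rpow_natCast ((2:ℝ) ^ (-c' : ℝ)) l, ← Real.rpow_mul (by norm_num)]
          ring_nf
        calc (n:ℝ) ^ (-c : ℝ) ≤ ((2^l : ℕ):ℝ) ^ (-c : ℝ) := a1
          _ ≤ ((2^l : ℕ):ℝ) ^ (-c' : ℝ) := a2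
          _ = q ^ l := a3
      have hmn : (n:ℝ) ^ (-c : ℝ) ≤ mRandom θ T p n := le_trans hrpow hlow
      have hmnpos : 0 < mRandom θ T p n := lt_of_lt_of_le (Real.rpow_pos_of_pos hnpos _) hmn
      have hlogm : -c * Real.log (n:ℝ) ≤ Real.log (mRandom θ T p n) := by
        have := Real.log_le_log (Real.rpow_pos_of_pos hnpos _) hmn
        rwa [Real.log_rpow hnpos] at this
      have hlogn : 0 < Real.log (n:ℝ) :=
        Real.log_pos (by exact_mod_cast (by omega : 1 < n))
      have hlognneg : -Real.log (n:ℝ) < 0 := by linarith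
      constructor
      · rw [div_le_iff_of_neg hlognneg]
        linarith [hlogm]
      · have hlogn1 : 1 ≤ Real.log (n:ℝ) := by
          rw [Real.le_log_iff_exp_le hnpos]
          calc Real.exp 1 ≤ 2.7182818286 := Real.exp_one_lt_d9.le
            _ ≤ 3 := by norm_num
            _ ≤ (n:ℝ) := by exact_mod_cast hn3
        have hm2 : mRandom θ T p n ≤ max (mRandom θ T p 2) 1 :=
          le_trans (mRandom_anti θ T p (by omega) (by omega)) (le_max_left _ _)
        have hlogup : Real.log (mRandom θ T p n) ≤ A := by
          rw [hA_def]
          exact Real.log_le_log hmnpos hm2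
        rw [le_div_iff_of_neg hlognneg]
        calc Real.log (mRandom θ T p n) ≤ A := hlogup
          _ ≤ A * Real.log (n:ℝ) := le_mul_of_one_le_right hA0 hlogn1
          _ = -A * -Real.log (n:ℝ) := by ring
    have hco : IsBoundedUnder (· ≥ ·) atTop
        (fun n : ℕ => Real.log (mRandom θ T p n) / (-Real.log (n:ℝ))) :=
      ⟨-A, eventually_map.2 (hev_n.mono fun n h => h.2)⟩
    exact limsup_le_of_le hco.isCoboundedUnder_le (hev_n.mono fun n h => h.1)
  -- conclusion
  have hall : ∀ᵐ p ∂M, ∀ j : ℕ,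
      limsup (fun n : ℕ => Real.log (mRandom θ T p n) / (-Real.log (n:ℝ))) atTop ≤
        ((m+2:ℕ):ℝ) / ((((m+2:ℕ):ℝ) - 1) * D) + 1/(j+1) :=
    ae_all_iff.2 fun j => key _ (lt_add_of_pos_right _ (by positivity))
  filter_upwards [hall] with p hp
  refine le_of_forall_pos_le_add fun ε hε => ?_
  obtain ⟨j, hj⟩ := exists_nat_one_div_lt hε
  exact (hp j).trans (by push_cast; push_cast at hj; linarith)
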